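/- Let Σ and L be positive self-adjoint bounded operators on a Hilbert space with L ⪯ c_d Σ^a for some a ∈ [0,1] and c_d > 0, and let P be an orthogonal projection. Then for any λ > 0, with C = Σ + λL: ‖(I − P) C^{1/2}‖²_op ≤ ‖(I − P) Σ^{1/2}‖²_op + c_d λ ‖(I − P) Σ^{1/2}‖^{2a}_op. -/

import Mathlib

private lemma tangent_ineq' {a s x : ℝ} (ha0 : 0 ≤ a) (ha1 : a ≤ 1) (hs : 0 < s) (hx : 0 ≤ x) :
    x ^ a ≤ a * s ^ (a - 1) * x + (1 - a) * s ^ a := by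
  have h1 : (x / s) ^ a * (1:ℝ) ^ (1 - a) ≤ a * (x / s) + (1 - a) * 1 :=
    Real.geom_mean_le_arith_mean2_weighted ha0 (by linarith) (div_nonneg hx hs.le)
      zero_le_one (by ring)
  rw [Real.one_rpow, mul_one, mul_one] at h1
  have h2 : s ^ a * ((x / s) ^ a) ≤ s ^ a * (a * (x / s) + (1 - a)) :=
    mul_le_mul_of_nonneg_left h1 (Real.rpow_nonneg hs.le a)
  calc x ^ a = s ^ a * (x / s) ^ a := by
        rw [← Real.mul_rpow hs.le (div_nonneg hx hs.le), mul_div_cancel₀ _ hs.ne']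
    _ ≤ s ^ a * (a * (x / s) + (1 - a)) := h2
    _ = a * (s ^ a / s) * x + (1 - a) * s ^ a := by field_simp
    _ = a * s ^ (a - 1) * x + (1 - a) * s ^ a := by rw [← Real.rpow_sub_one hs.ne' a]

private lemma smul_le_smul_cstar' {A : Type*} [Ring A] [StarRing A] [PartialOrder A]
    [StarOrderedRing A] [Algebra ℂ A] [StarModule ℂ A] {X Y : A} (h : X ≤ Y)
    {r : ℝ} (hr : 0 ≤ r) : (r : ℂ) • X ≤ (r : ℂ) • Y := by
  have key : ∀ Z : A, star ((Real.sqrt r : ℂ) • (1:A)) * Z * ((Real.sqrt r : ℂ) • 1)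
      = (r : ℂ) • Z := by
    intro Z
    rw [star_smul, star_one, smul_mul_assoc, one_mul, mul_smul_comm, mul_one, smul_smul]
    congr 1
    rw [Complex.star_def, Complex.conj_ofReal]
    norm_cast
    exact Real.mul_self_sqrt hr
  calc (r:ℂ) • X = _ := (key X).symm
    _ ≤ star ((Real.sqrt r : ℂ) • (1:A)) * Y * ((Real.sqrt r : ℂ) • 1) :=
        star_left_conjugate_le_conjugate h _
    _ = (r:ℂ) • Y := key Y

section aux
variable {E : Type*} [NormedAddCommGroup E] [InnerProductSpace ℂ E] [CompleteSpace E]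

private lemma normsq_eq' (Q T : E →L[ℂ] E) (hQ : IsSelfAdjoint Q) (hT : (0:E→L[ℂ]E) ≤ T) :
    ‖Q * cfc (fun x : ℝ => x ^ ((1:ℝ)/2)) T‖ ^ (2:ℕ) = ‖Q * T * Q‖ := by
  set R := cfc (fun x : ℝ => x ^ ((1:ℝ)/2)) T with hR
  have hRsa : IsSelfAdjoint R := cfc_predicate _ T
  have hRR : R * R = T := by
    rw [hR, ← cfc_mul _ _ T ((Real.continuous_rpow_const (by norm_num)).continuousOn)
      ((Real.continuous_rpow_const (by norm_num)).continuousOn)]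
    calc cfc (fun x : ℝ => x ^ ((1:ℝ)/2) * x ^ ((1:ℝ)/2)) T = cfc (id : ℝ → ℝ) T := by
          apply cfc_congr
          intro x hx
          have hx0 : 0 ≤ x := spectrum_nonneg_of_nonneg hT hx
          show x ^ ((1:ℝ)/2) * x ^ ((1:ℝ)/2) = x
          rw [← Real.sqrt_eq_rpow, Real.mul_self_sqrt hx0]
      _ = T := cfc_id ℝ T
  have h := CStarRing.norm_self_mul_star (x := Q * R)
  rw [star_mul, hRsa.star_eq, hQ.star_eq] at h
  have h2 : Q * R * (R * Q) = Q * T * Q := by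
    rw [← hRR]; noncomm_ring
  rw [h2] at h
  rw [h]; ring

private lemma proj_rpow_bound' (Q Sig : E →L[ℂ] E) (hQsa : IsSelfAdjoint Q) (hQQ : Q * Q = Q)
    (hQn : ‖Q‖ ≤ 1) (hS : (0:E→L[ℂ]E) ≤ Sig) {a : ℝ} (ha0 : 0 ≤ a) (ha1 : a ≤ 1) :
    ‖Q * cfc (fun x : ℝ => x ^ a) Sig * Q‖ ≤ ‖Q * Sig * Q‖ ^ a := by
  have hSsa : IsSelfAdjoint Sig := .of_nonneg hS
  have hconta : ContinuousOn (fun x : ℝ => x ^ a) (spectrum ℝ Sig) :=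
    (Real.continuous_rpow_const ha0).continuousOn
  have hQ0 : (0:E→L[ℂ]E) ≤ Q := by
    have := star_mul_self_nonneg Q
    rwa [hQsa.star_eq, hQQ] at this
  have hpos : (0:E→L[ℂ]E) ≤ Q * cfc (fun x : ℝ => x ^ a) Sig * Q := by
    have h0 : (0:E→L[ℂ]E) ≤ cfc (fun x : ℝ => x ^ a) Sig :=
      cfc_nonneg (fun x hx => Real.rpow_nonneg (spectrum_nonneg_of_nonneg hS hx) a)
    have := star_left_conjugate_nonneg h0 Q
    rwa [hQsa.star_eq] at this
  have key : ∀ s : ℝ, 0 < s →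
      ‖Q * cfc (fun x : ℝ => x ^ a) Sig * Q‖ ≤ a * s ^ (a-1) * ‖Q * Sig * Q‖ + (1-a) * s ^ a := by
    intro s hs
    set c := a * s ^ (a-1) with hc
    set d := (1-a) * s ^ a with hd
    have hc0 : 0 ≤ c := mul_nonneg ha0 (Real.rpow_nonneg hs.le _)
    have hd0 : 0 ≤ d := mul_nonneg (by linarith) (Real.rpow_nonneg hs.le _)
    have hle : cfc (fun x : ℝ => x ^ a) Sig ≤ c • Sig + d • 1 := by
      have h1 : cfc (fun x : ℝ => x ^ a) Sig ≤ cfc (fun x : ℝ => c * x + d) Sig := by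
        refine cfc_mono (fun x hx => tangent_ineq' ha0 ha1 hs (spectrum_nonneg_of_nonneg hS hx))
          hconta (by fun_prop)
      refine h1.trans_eq ?_
      rw [cfc_add Sig (fun x => c * x) (fun _ => d) (by fun_prop) (by fun_prop),
        cfc_const_mul c (fun x : ℝ => x) Sig (by fun_prop), cfc_id' ℝ Sig, cfc_const d Sig,
        Algebra.algebraMap_eq_smul_one]
    have h2 : Q * cfc (fun x : ℝ => x ^ a) Sig * Q ≤ Q * (c • Sig + d • 1) * Q :=
      hQsa.conjugate_le_conjugate hle
    have h3 : Q * (c • Sig + d • 1) * Q = c • (Q * Sig * Q) + d • Q := by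
      rw [mul_add, add_mul]
      rw [mul_smul_comm, mul_smul_comm, smul_mul_assoc, smul_mul_assoc, mul_one, hQQ]
    rw [h3] at h2
    calc ‖Q * cfc (fun x : ℝ => x ^ a) Sig * Q‖ ≤ ‖c • (Q * Sig * Q) + d • Q‖ :=
          CStarAlgebra.norm_le_norm_of_nonneg_of_le hpos h2
      _ ≤ ‖c • (Q * Sig * Q)‖ + ‖d • Q‖ := norm_add_le _ _
      _ = c * ‖Q * Sig * Q‖ + d * ‖Q‖ := by
          rw [norm_smul, norm_smul, Real.norm_of_nonneg hc0, Real.norm_of_nonneg hd0]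
      _ ≤ c * ‖Q * Sig * Q‖ + d := by nlinarith
  set m := ‖Q * Sig * Q‖ with hm
  have hm0 : 0 ≤ m := norm_nonneg _
  rcases eq_or_lt_of_le ha0 with haz | hapos
  · have hfn : cfc (fun x : ℝ => x ^ a) Sig = 1 := by
      rw [← haz]
      calc cfc (fun x : ℝ => x ^ (0:ℝ)) Sig = cfc (fun _ : ℝ => (1:ℝ)) Sig := by
            apply cfc_congr; intro x _; exact Real.rpow_zero x
        _ = 1 := by rw [cfc_const 1 Sig, map_one]
    rw [hfn, mul_one, hQQ, ← haz, Real.rpow_zero]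
    exact hQn
  · rcases eq_or_lt_of_le hm0 with hmz | hmpos
    · rw [← hmz, Real.zero_rpow hapos.ne']
      refine le_of_forall_pos_le_add (fun ε hε => ?_)
      have hs : (0:ℝ) < ε ^ (1/a) := Real.rpow_pos_of_pos hε _
      have hk := key _ hs
      rw [← hmz] at hk
      have hsa : (ε ^ (1/a)) ^ a = ε := by
        rw [← Real.rpow_mul hε.le, one_div, inv_mul_cancel₀ hapos.ne', Real.rpow_one]
      have : (1 - a) * (ε ^ (1/a)) ^ a ≤ ε := by
        rw [hsa]; nlinarith
      calc ‖Q * cfc (fun x : ℝ => x ^ a) Sig * Q‖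
          ≤ a * (ε ^ (1/a)) ^ (a-1) * 0 + (1-a) * (ε ^ (1/a)) ^ a := hk
        _ ≤ 0 + ε := by rw [mul_zero, zero_add, zero_add]; exact this
    · have hk := key m hmpos
      have h1 : m ^ (a-1) * m = m ^ a := by
        rw [← Real.rpow_add_one hmpos.ne' (a-1)]; ring_nf
      calc ‖Q * cfc (fun x : ℝ => x ^ a) Sig * Q‖
          ≤ a * m ^ (a-1) * m + (1-a) * m ^ a := hk
        _ = m ^ a := by rw [mul_assoc, h1]; ring

end aux

/-- Let `Σ` (here `Sig`) and `L` be positive self-adjoint bounded operators on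
a Hilbert space with `L ⪯ c_d Σ^a` in the Löwner order, for some `a ∈ [0,1]` and `c_d > 0`
(`Σ^a` given by the continuous functional calculus), and let `P` be an orthogonal projection.
Then for any `λ > 0`, with `C = Σ + λL` and square roots given by functional calculus,
`‖(I − P) C^{1/2}‖² ≤ ‖(I − P) Σ^{1/2}‖² + c_d λ ‖(I − P) Σ^{1/2}‖^{2a}`. -/
theorem low_rank_projection_bound
    {E : Type*} [NormedAddCommGroup E] [InnerProductSpace ℂ E] [CompleteSpace E]
    (Sig L P : E →L[ℂ] E)
    (hSig : Sig.IsPositive) (hL : L.IsPositive)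
    (hP : IsSelfAdjoint P) (hPproj : P.comp P = P)
    (a : ℝ) (ha0 : 0 ≤ a) (ha1 : a ≤ 1) (cd : ℝ) (hcd : 0 < cd)
    (hLow : L ≤ (cd : ℂ) • cfc (fun x : ℝ => x ^ a) Sig)
    (lam : ℝ) (hlam : 0 < lam) :
    ‖((1 : E →L[ℂ] E) - P).comp
        (cfc (fun x : ℝ => x ^ ((1 : ℝ)/2)) (Sig + (lam : ℂ) • L))‖ ^ (2 : ℕ)
      ≤ ‖((1 : E →L[ℂ] E) - P).comp (cfc (fun x : ℝ => x ^ ((1 : ℝ)/2)) Sig)‖ ^ (2 : ℕ)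
        + cd * lam *
          ‖((1 : E →L[ℂ] E) - P).comp (cfc (fun x : ℝ => x ^ ((1 : ℝ)/2)) Sig)‖ ^ (2 * a) := by
  have hS0 : (0:E→L[ℂ]E) ≤ Sig := (ContinuousLinearMap.nonneg_iff_isPositive Sig).mpr hSig
  have hL0 : (0:E→L[ℂ]E) ≤ L := (ContinuousLinearMap.nonneg_iff_isPositive L).mpr hL
  set Q := (1 : E →L[ℂ] E) - P with hQdef
  have hQsa : IsSelfAdjoint Q := (IsSelfAdjoint.one (E →L[ℂ] E)).sub hP
  have hPP : P * P = P := hPproj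
  have hQQ : Q * Q = Q := by
    rw [hQdef, sub_mul, mul_sub, mul_sub, hPP, one_mul, mul_one, one_mul]
    abel
  have hQn : ‖Q‖ ≤ 1 := by
    have h := CStarRing.norm_star_mul_self (x := Q)
    rw [hQsa.star_eq, hQQ] at h
    nlinarith [norm_nonneg Q]
  have hlamL0 : (0:E→L[ℂ]E) ≤ (lam : ℂ) • L := by
    have := smul_le_smul_cstar' hL0 hlam.le
    rwa [smul_zero] at this
  have hC0 : (0:E→L[ℂ]E) ≤ Sig + (lam : ℂ) • L := add_nonneg hS0 hlamL0
  -- rewrite comps as mults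
  simp only [← hQdef, ← ContinuousLinearMap.mul_def]
  rw [normsq_eq' Q _ hQsa hC0, normsq_eq' Q Sig hQsa hS0]
  have h2a : ‖Q * cfc (fun x : ℝ => x ^ ((1:ℝ)/2)) Sig‖ ^ (2 * a) = ‖Q * Sig * Q‖ ^ a := by
    rw [Real.rpow_mul (norm_nonneg _), Real.rpow_two, ← normsq_eq' Q Sig hQsa hS0]
  rw [h2a]
  -- order step
  set X := Q * cfc (fun x : ℝ => x ^ a) Sig * Q with hX
  have horder : Q * (Sig + (lam:ℂ) • L) * Q ≤ Q * Sig * Q + (lam:ℂ) • ((cd:ℂ) • X) := by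
    have h1 : Sig + (lam:ℂ) • L ≤ Sig + (lam:ℂ) • ((cd:ℂ) • cfc (fun x : ℝ => x ^ a) Sig) :=
      add_le_add_right (smul_le_smul_cstar' hLow hlam.le) Sig
    have h2 := hQsa.conjugate_le_conjugate h1
    refine h2.trans_eq ?_
    rw [hX, mul_add, add_mul, mul_smul_comm, mul_smul_comm, smul_mul_assoc, smul_mul_assoc]
  have hQCQ0 : (0:E→L[ℂ]E) ≤ Q * (Sig + (lam:ℂ) • L) * Q := by
    have := star_left_conjugate_nonneg hC0 Q
    rwa [hQsa.star_eq] at this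
  have hXb : ‖X‖ ≤ ‖Q * Sig * Q‖ ^ a := proj_rpow_bound' Q Sig hQsa hQQ hQn hS0 ha0 ha1
  calc ‖Q * (Sig + (lam:ℂ) • L) * Q‖ ≤ ‖Q * Sig * Q + (lam:ℂ) • ((cd:ℂ) • X)‖ :=
        CStarAlgebra.norm_le_norm_of_nonneg_of_le hQCQ0 horder
    _ ≤ ‖Q * Sig * Q‖ + ‖(lam:ℂ) • ((cd:ℂ) • X)‖ := norm_add_le _ _
    _ = ‖Q * Sig * Q‖ + lam * (cd * ‖X‖) := by
        rw [norm_smul, norm_smul, Complex.norm_real, Complex.norm_real,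
          Real.norm_of_nonneg hlam.le, Real.norm_of_nonneg hcd.le]
    _ ≤ ‖Q * Sig * Q‖ + cd * lam * ‖Q * Sig * Q‖ ^ a := by
        have h5 : cd * lam * ‖X‖ ≤ cd * lam * ‖Q * Sig * Q‖ ^ a :=
          mul_le_mul_of_nonneg_left hXb (by positivity)
        nlinarith
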